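/- Define h(ω) := 1 − √π·ω·exp(ω²)·erfc(ω). Then for every ω > 0: 1 − 2/(1 + √(1 + 4/(π·ω²))) ≤ h(ω) ≤ 1 − 2/(1 + √(1 + 2/ω²)). -/

import Mathlib

open Real MeasureTheory Set

/-- The complementary error function. -/
noncomputable def erfc (z : ℝ) : ℝ :=
  (2 / Real.sqrt π) * ∫ u in Set.Ioi z, Real.exp (-u ^ 2)

/-- `h(ω) = 1 − √π · ω · exp(ω²) · erfc(ω)`. -/
noncomputable def hfun (ω : ℝ) : ℝ :=
  1 - Real.sqrt π * ω * Real.exp (ω ^ 2) * erfc ω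

open Filter


noncomputable def Ifun (x : ℝ) : ℝ := ∫ u in Set.Ioi x, Real.exp (-u ^ 2)

lemma cont_gauss : Continuous fun u : ℝ => Real.exp (-u ^ 2) := by
  continuity

lemma integrable_gauss : Integrable (fun u : ℝ => Real.exp (-u ^ 2)) := by
  have := integrable_exp_neg_mul_sq (b := 1) one_pos
  simpa using this

lemma Ifun_zero : Ifun 0 = Real.sqrt π / 2 := by
  have := integral_gaussian_Ioi 1
  simp only [neg_mul, one_mul, div_one] at this
  simpa [Ifun] using this

lemma Ifun_split (x : ℝ) :
    Ifun x = Ifun 0 - ∫ u in (0:ℝ)..x, Real.exp (-u ^ 2) := by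
  rcases le_or_gt 0 x with hx | hx
  · have h : Ioc (0:ℝ) x ∪ Ioi x = Ioi 0 := Ioc_union_Ioi_eq_Ioi hx
    have h2 : ∫ u in Ioc (0:ℝ) x ∪ Ioi x, Real.exp (-u ^ 2)
        = (∫ u in Ioc (0:ℝ) x, Real.exp (-u ^ 2)) + ∫ u in Ioi x, Real.exp (-u ^ 2) :=
      setIntegral_union Ioc_disjoint_Ioi_same measurableSet_Ioi
        integrable_gauss.integrableOn integrable_gauss.integrableOn
    rw [h] at h2
    rw [intervalIntegral.integral_of_le hx]
    simp only [Ifun]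
    rw [h2]; ring
  · have h : Ioc x (0:ℝ) ∪ Ioi 0 = Ioi x := Ioc_union_Ioi_eq_Ioi hx.le
    have h2 : ∫ u in Ioc x (0:ℝ) ∪ Ioi 0, Real.exp (-u ^ 2)
        = (∫ u in Ioc x (0:ℝ), Real.exp (-u ^ 2)) + ∫ u in Ioi 0, Real.exp (-u ^ 2) :=
      setIntegral_union Ioc_disjoint_Ioi_same measurableSet_Ioi
        integrable_gauss.integrableOn integrable_gauss.integrableOn
    rw [h] at h2
    rw [intervalIntegral.integral_symm, intervalIntegral.integral_of_le hx.le]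
    simp only [Ifun]
    rw [h2]; ring

lemma hasDerivAt_Ifun (x : ℝ) :
    HasDerivAt Ifun (-Real.exp (-x ^ 2)) x := by
  have h : HasDerivAt (fun y => ∫ u in (0:ℝ)..y, Real.exp (-u ^ 2)) (Real.exp (-x ^ 2)) x :=
    intervalIntegral.integral_hasDerivAt_right (cont_gauss.intervalIntegrable _ _)
      (cont_gauss.stronglyMeasurableAtFilter _ _) cont_gauss.continuousAt
  have h2 : HasDerivAt (fun y => Ifun 0 - ∫ u in (0:ℝ)..y, Real.exp (-u ^ 2))
      (-Real.exp (-x ^ 2)) x := by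
    have := (hasDerivAt_const x (Ifun 0)).sub h; rw [zero_sub] at this; exact this
  exact h2.congr_of_eventuallyEq (Eventually.of_forall Ifun_split)

lemma Ifun_nonneg (x : ℝ) : 0 ≤ Ifun x :=
  setIntegral_nonneg measurableSet_Ioi fun u _ => (Real.exp_pos _).le

lemma Ifun_le (x : ℝ) (hx : 1 ≤ x) : Ifun x ≤ Real.exp (-x) := by
  have h : Ifun x ≤ ∫ u in Ioi x, Real.exp (-u) := by
    have hint : IntegrableOn (fun u : ℝ => Real.exp (-u)) (Ioi x) := by
      have := exp_neg_integrableOn_Ioi x one_pos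
      simpa using this
    apply setIntegral_mono_on integrable_gauss.integrableOn hint measurableSet_Ioi
    intro u hu
    apply Real.exp_le_exp.2
    have h1x : (1:ℝ) ≤ u := hx.trans (le_of_lt hu)
    nlinarith [sq_nonneg u]
  rwa [integral_exp_neg_Ioi] at h

lemma Ifun_tendsto : Tendsto Ifun atTop (nhds 0) := by
  apply tendsto_of_tendsto_of_tendsto_of_le_of_le' tendsto_const_nhds
    (tendsto_exp_neg_atTop_nhds_zero)
  · exact Eventually.of_forall Ifun_nonneg
  · filter_upwards [eventually_ge_atTop (1:ℝ)] with x hx using Ifun_le x hx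

noncomputable def Gfun (a x : ℝ) : ℝ := (x + Real.sqrt (x ^ 2 + a))⁻¹

lemma s_pos {a : ℝ} (ha : 0 < a) (x : ℝ) : 0 < Real.sqrt (x ^ 2 + a) :=
  Real.sqrt_pos.2 (by positivity)

lemma s_sq {a : ℝ} (ha : 0 < a) (x : ℝ) : (Real.sqrt (x ^ 2 + a)) ^ 2 = x ^ 2 + a :=
  Real.sq_sqrt (by positivity)

lemma abs_lt_s {a : ℝ} (ha : 0 < a) (x : ℝ) : |x| < Real.sqrt (x ^ 2 + a) := by
  rw [← Real.sqrt_sq_eq_abs]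
  exact Real.sqrt_lt_sqrt (sq_nonneg x) (by linarith)

lemma xs_pos {a : ℝ} (ha : 0 < a) (x : ℝ) : 0 < x + Real.sqrt (x ^ 2 + a) := by
  have h := abs_lt_s ha x
  have := neg_abs_le x
  linarith

lemma hasDerivAt_G {a : ℝ} (ha : 0 < a) (x : ℝ) :
    HasDerivAt (Gfun a)
      (-((1 + x / Real.sqrt (x ^ 2 + a)) / (x + Real.sqrt (x ^ 2 + a)) ^ 2)) x := by
  have hs := s_pos ha x
  have h1 : HasDerivAt (fun y : ℝ => y ^ 2 + a) (2 * x) x := by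
    simpa using (hasDerivAt_pow 2 x).add_const a
  have h2 : HasDerivAt (fun y : ℝ => Real.sqrt (y ^ 2 + a))
      (2 * x / (2 * Real.sqrt (x ^ 2 + a))) x := h1.sqrt (by positivity)
  have h2' : HasDerivAt (fun y : ℝ => Real.sqrt (y ^ 2 + a))
      (x / Real.sqrt (x ^ 2 + a)) x := by
    convert h2 using 1
    field_simp
  have h3 : HasDerivAt (fun y : ℝ => y + Real.sqrt (y ^ 2 + a))
      (1 + x / Real.sqrt (x ^ 2 + a)) x := (hasDerivAt_id x).add h2'
  have := h3.inv (ne_of_gt (xs_pos ha x))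
  rw [neg_div] at this
  exact this

lemma deriv_identity (x s a e : ℝ) (hs2 : s ^ 2 = x ^ 2 + a) (hs0 : 0 < s)
    (hxs : 0 < x + s) :
    e * ((x - (a - 1) * s) / (s * (x + s) ^ 2))
      = -e - (e * (-(2 * x)) * (x + s)⁻¹ + e * -((1 + x / s) / (x + s) ^ 2)) := by
  obtain rfl : a = s ^ 2 - x ^ 2 := by linarith
  field_simp
  ring

noncomputable def Dfun (a x : ℝ) : ℝ := Ifun x - Real.exp (-x ^ 2) * Gfun a x

lemma hasDerivAt_D {a : ℝ} (ha : 0 < a) (x : ℝ) :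
    HasDerivAt (Dfun a)
      (Real.exp (-x ^ 2) * ((x - (a - 1) * Real.sqrt (x ^ 2 + a)) /
        (Real.sqrt (x ^ 2 + a) * (x + Real.sqrt (x ^ 2 + a)) ^ 2))) x := by
  have hs0 := s_pos ha x
  have hs2 := s_sq ha x
  have hxs := xs_pos ha x
  have h1 : HasDerivAt (fun y : ℝ => -y ^ 2) (-(2 * x)) x := by
    have := (hasDerivAt_pow 2 x).neg; norm_num at this; exact this
  have he : HasDerivAt (fun y : ℝ => Real.exp (-y ^ 2)) (Real.exp (-x ^ 2) * (-(2 * x))) x :=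
    h1.exp
  have hprod := he.mul (hasDerivAt_G ha x)
  have hD := (hasDerivAt_Ifun x).sub hprod
  have : HasDerivAt (Dfun a)
      (-Real.exp (-x ^ 2) - (Real.exp (-x ^ 2) * (-(2 * x)) * Gfun a x +
        Real.exp (-x ^ 2) * -((1 + x / Real.sqrt (x ^ 2 + a)) /
          (x + Real.sqrt (x ^ 2 + a)) ^ 2))) x := hD
  convert this using 1
  rw [Gfun]
  exact deriv_identity x _ a _ hs2 hs0 hxs

lemma deriv_D {a : ℝ} (ha : 0 < a) (x : ℝ) :
    deriv (Dfun a) x = Real.exp (-x ^ 2) * ((x - (a - 1) * Real.sqrt (x ^ 2 + a)) /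
        (Real.sqrt (x ^ 2 + a) * (x + Real.sqrt (x ^ 2 + a)) ^ 2)) :=
  (hasDerivAt_D ha x).deriv

lemma G_pos {a : ℝ} (ha : 0 < a) (x : ℝ) : 0 < Gfun a x := by
  rw [Gfun]; exact inv_pos.2 (xs_pos ha x)

lemma D_tendsto {a : ℝ} (ha : 0 < a) : Tendsto (Dfun a) atTop (nhds 0) := by
  have h1 : Tendsto (fun x : ℝ => Real.exp (-x ^ 2)) atTop (nhds 0) :=
    tendsto_exp_neg_atTop_nhds_zero.comp (tendsto_pow_atTop two_ne_zero)
  have h2 : Tendsto (fun x : ℝ => Real.exp (-x ^ 2) * (Real.sqrt a)⁻¹) atTop (nhds 0) := by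
    simpa using h1.mul_const (Real.sqrt a)⁻¹
  have h3 : Tendsto (fun x : ℝ => Real.exp (-x ^ 2) * Gfun a x) atTop (nhds 0) := by
    apply tendsto_of_tendsto_of_tendsto_of_le_of_le' tendsto_const_nhds h2
    · exact Eventually.of_forall fun x => (mul_pos (Real.exp_pos _) (G_pos ha x)).le
    · filter_upwards [eventually_ge_atTop (0:ℝ)] with x hx
      have hsa : Real.sqrt a ≤ x + Real.sqrt (x ^ 2 + a) := by
        have : Real.sqrt a ≤ Real.sqrt (x ^ 2 + a) := Real.sqrt_le_sqrt (by nlinarith)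
        linarith
      have : Gfun a x ≤ (Real.sqrt a)⁻¹ := by
        rw [Gfun]
        exact inv_anti₀ (Real.sqrt_pos.2 ha) hsa
      exact mul_le_mul_of_nonneg_left this (Real.exp_pos _).le
  have := Ifun_tendsto.sub h3
  simp only [sub_zero] at this; exact this

/-- Lower bound on the Mills-type integral. -/
lemma Ifun_ge (ω : ℝ) (hω : 0 < ω) : Real.exp (-ω ^ 2) * Gfun 2 ω ≤ Ifun ω := by
  have h2 : (0:ℝ) < 2 := two_pos
  have hanti : AntitoneOn (Dfun 2) (Ici ω) := by
    apply antitoneOn_of_deriv_nonpos (convex_Ici ω)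
    · exact fun x _ => (hasDerivAt_D h2 x).continuousAt.continuousWithinAt
    · exact fun x _ => (hasDerivAt_D h2 x).differentiableAt.differentiableWithinAt
    · intro x _
      rw [deriv_D h2 x]
      apply mul_nonpos_of_nonneg_of_nonpos (Real.exp_pos _).le
      apply div_nonpos_of_nonpos_of_nonneg
      · have := abs_lt_s h2 x
        have := le_abs_self x
        linarith
      · positivity
  have hle : (0:ℝ) ≤ Dfun 2 ω := by
    apply le_of_tendsto (D_tendsto h2)
    filter_upwards [eventually_ge_atTop ω] with y hy
    exact hanti self_mem_Ici hy hy
  simpa [Dfun, sub_nonneg] using hle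

lemma sign_low {a x : ℝ} (ha1 : 1 < a) (ha2 : a < 2) (hx : 0 ≤ x)
    (hxle : x * Real.sqrt (2 - a) ≤ a - 1) : x ≤ (a - 1) * Real.sqrt (x ^ 2 + a) := by
  have ht2 : (Real.sqrt (2 - a)) ^ 2 = 2 - a := Real.sq_sqrt (by linarith)
  have ht0 : 0 < Real.sqrt (2 - a) := Real.sqrt_pos.2 (by linarith)
  have hs2 : (Real.sqrt (x ^ 2 + a)) ^ 2 = x ^ 2 + a := Real.sq_sqrt (by positivity)
  have hs0 : 0 < Real.sqrt (x ^ 2 + a) := Real.sqrt_pos.2 (by positivity)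
  have h1 : x ^ 2 * (2 - a) ≤ (a - 1) ^ 2 := by
    have := mul_self_le_mul_self (by positivity) hxle
    nlinarith [ht2]
  have h2 : x ^ 2 ≤ ((a - 1) * Real.sqrt (x ^ 2 + a)) ^ 2 := by
    have h3 : ((a - 1) * Real.sqrt (x ^ 2 + a)) ^ 2 = (a - 1) ^ 2 * (x ^ 2 + a) := by
      rw [mul_pow, hs2]
    nlinarith [h1, sq_nonneg (a - 1), sq_nonneg x]
  have := Real.sqrt_le_sqrt h2
  rwa [Real.sqrt_sq hx, Real.sqrt_sq (mul_nonneg (by linarith) hs0.le)] at this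

lemma sign_high {a x : ℝ} (ha1 : 1 < a) (ha2 : a < 2) (hx : 0 ≤ x)
    (hxge : a - 1 ≤ x * Real.sqrt (2 - a)) : (a - 1) * Real.sqrt (x ^ 2 + a) ≤ x := by
  have ht2 : (Real.sqrt (2 - a)) ^ 2 = 2 - a := Real.sq_sqrt (by linarith)
  have ht0 : 0 < Real.sqrt (2 - a) := Real.sqrt_pos.2 (by linarith)
  have hs2 : (Real.sqrt (x ^ 2 + a)) ^ 2 = x ^ 2 + a := Real.sq_sqrt (by positivity)
  have hs0 : 0 < Real.sqrt (x ^ 2 + a) := Real.sqrt_pos.2 (by positivity)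
  have h1 : (a - 1) ^ 2 ≤ x ^ 2 * (2 - a) := by
    have := mul_self_le_mul_self (by linarith) hxge
    nlinarith [ht2]
  have h2 : ((a - 1) * Real.sqrt (x ^ 2 + a)) ^ 2 ≤ x ^ 2 := by
    have h3 : ((a - 1) * Real.sqrt (x ^ 2 + a)) ^ 2 = (a - 1) ^ 2 * (x ^ 2 + a) := by
      rw [mul_pow, hs2]
    nlinarith [h1, sq_nonneg (a - 1), sq_nonneg x]
  have := Real.sqrt_le_sqrt h2
  rwa [Real.sqrt_sq (mul_nonneg (by linarith) hs0.le), Real.sqrt_sq hx] at this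

lemma Dfun_zero : Dfun (4 / π) 0 = 0 := by
  have hsq : Real.sqrt (4 / π) = 2 / Real.sqrt π := by
    rw [show (4:ℝ) / π = (2 / Real.sqrt π) ^ 2 by
      rw [div_pow, Real.sq_sqrt Real.pi_pos.le]; norm_num]
    exact Real.sqrt_sq (by positivity)
  simp [Dfun, Gfun, Ifun_zero, hsq, inv_div]

lemma Ifun_le_upper (ω : ℝ) (hω : 0 < ω) :
    Ifun ω ≤ Real.exp (-ω ^ 2) * Gfun (4 / π) ω := by
  have hπ4 : π < 4 := by linarith [Real.pi_lt_d2]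
  have hπ2 : 2 < π := by linarith [Real.pi_gt_three]
  have ha : (0:ℝ) < 4 / π := by positivity
  have ha1 : (1:ℝ) < 4 / π := (one_lt_div Real.pi_pos).2 hπ4
  have ha2 : (4:ℝ) / π < 2 := (div_lt_iff₀ Real.pi_pos).2 (by linarith)
  have ht0 : 0 < Real.sqrt (2 - 4 / π) := Real.sqrt_pos.2 (by linarith)
  set x₀ : ℝ := (4 / π - 1) / Real.sqrt (2 - 4 / π) with hx₀def
  have hx₀ : 0 ≤ x₀ := div_nonneg (by linarith) (Real.sqrt_nonneg _)
  suffices h : Dfun (4 / π) ω ≤ 0 by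
    have : Ifun ω - Real.exp (-ω ^ 2) * Gfun (4 / π) ω ≤ 0 := h
    linarith
  rcases le_or_gt ω x₀ with hcase | hcase
  · have hanti : AntitoneOn (Dfun (4 / π)) (Icc 0 x₀) := by
      apply antitoneOn_of_deriv_nonpos (convex_Icc 0 x₀)
      · exact fun x _ => (hasDerivAt_D ha x).continuousAt.continuousWithinAt
      · exact fun x _ => (hasDerivAt_D ha x).differentiableAt.differentiableWithinAt
      · intro x hx
        rw [interior_Icc] at hx
        rw [deriv_D ha x]
        apply mul_nonpos_of_nonneg_of_nonpos (Real.exp_pos _).le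
        apply div_nonpos_of_nonpos_of_nonneg
        · have hxle : x * Real.sqrt (2 - 4 / π) ≤ 4 / π - 1 := by
            rw [← le_div_iff₀ ht0]
            exact hx.2.le
          have := sign_low ha1 ha2 hx.1.le hxle
          linarith
        · have := s_pos ha x
          have := xs_pos ha x
          positivity
    have h0 : Dfun (4 / π) ω ≤ Dfun (4 / π) 0 :=
      hanti ⟨le_refl 0, hx₀⟩ ⟨hω.le, hcase⟩ hω.le
    rw [Dfun_zero] at h0
    exact h0
  · have hmono : MonotoneOn (Dfun (4 / π)) (Ici x₀) := by
      apply monotoneOn_of_deriv_nonneg (convex_Ici x₀)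
      · exact fun x _ => (hasDerivAt_D ha x).continuousAt.continuousWithinAt
      · exact fun x _ => (hasDerivAt_D ha x).differentiableAt.differentiableWithinAt
      · intro x hx
        rw [interior_Ici] at hx
        rw [deriv_D ha x]
        apply mul_nonneg (Real.exp_pos _).le
        apply div_nonneg
        · have hxpos : 0 ≤ x := le_trans hx₀ hx.le
          have hxge : 4 / π - 1 ≤ x * Real.sqrt (2 - 4 / π) := by
            rw [← div_le_iff₀ ht0]
            exact hx.le
          have := sign_high ha1 ha2 hxpos hxge
          linarith
        · have := s_pos ha x
          have := xs_pos ha x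
          positivity
    apply ge_of_tendsto (D_tendsto ha)
    filter_upwards [eventually_ge_atTop ω] with y hy
    exact hmono (mem_Ici.2 hcase.le) (mem_Ici.2 (hcase.le.trans hy)) hy

lemma hfun_eq (ω : ℝ) : hfun ω = 1 - 2 * ω * Real.exp (ω ^ 2) * Ifun ω := by
  rw [hfun, erfc]
  have h : Real.sqrt π ≠ 0 := by positivity
  rw [Ifun]
  field_simp

lemma two_div_eq (c ω : ℝ) (hc : 0 < c) (hω : 0 < ω) :
    2 / (1 + Real.sqrt (1 + c / ω ^ 2)) = 2 * ω * Gfun c ω := by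
  have h1 : Real.sqrt (1 + c / ω ^ 2) = Real.sqrt (ω ^ 2 + c) / ω := by
    rw [show 1 + c / ω ^ 2 = (ω ^ 2 + c) / ω ^ 2 by field_simp,
      Real.sqrt_div (by positivity), Real.sqrt_sq hω.le]
  have hxs := xs_pos hc ω
  rw [h1, Gfun]
  rw [show 1 + Real.sqrt (ω ^ 2 + c) / ω = (ω + Real.sqrt (ω ^ 2 + c)) / ω by field_simp]
  rw [div_div_eq_mul_div]
  field_simp

theorem hfun_bounds :
    ∀ ω : ℝ, 0 < ω →
      1 - 2 / (1 + Real.sqrt (1 + 4 / (π * ω ^ 2))) ≤ hfun ω ∧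
        hfun ω ≤ 1 - 2 / (1 + Real.sqrt (1 + 2 / ω ^ 2)) := by
  intro ω hω
  have hIl := Ifun_ge ω hω
  have hIu := Ifun_le_upper ω hω
  have hfactor : ∀ G : ℝ, 2 * ω * Real.exp (ω ^ 2) * (Real.exp (-ω ^ 2) * G) = 2 * ω * G := by
    intro G
    rw [show 2 * ω * Real.exp (ω ^ 2) * (Real.exp (-ω ^ 2) * G)
        = 2 * ω * G * (Real.exp (ω ^ 2) * Real.exp (-ω ^ 2)) by ring,
      ← Real.exp_add]
    simp
  have hpos : (0:ℝ) ≤ 2 * ω * Real.exp (ω ^ 2) := by positivity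
  constructor
  · rw [hfun_eq, show 4 / (π * ω ^ 2) = (4 / π) / ω ^ 2 by rw [div_div],
      two_div_eq (4 / π) ω (by positivity) hω]
    have h2 : 2 * ω * Real.exp (ω ^ 2) * Ifun ω
        ≤ 2 * ω * Real.exp (ω ^ 2) * (Real.exp (-ω ^ 2) * Gfun (4 / π) ω) :=
      mul_le_mul_of_nonneg_left hIu hpos
    rw [hfactor] at h2
    linarith
  · rw [hfun_eq, two_div_eq 2 ω two_pos hω]
    have h2 : 2 * ω * Real.exp (ω ^ 2) * (Real.exp (-ω ^ 2) * Gfun 2 ω)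
        ≤ 2 * ω * Real.exp (ω ^ 2) * Ifun ω :=
      mul_le_mul_of_nonneg_left hIl hpos
    rw [hfactor] at h2
    linarith
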